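/- Let H be a prebialgebra satisfying (rm) or (rc). Then the maps g: H_t → H_t* and f: H_t* → H_t are mutually inverse k-module isomorphisms, where g(h) = ε(−h), f(h*) = ⟨h*,1₍₁₎⟩1₍₂₎, H_t = Im(f∘g), and H_t* = Im(g∘f). -/
import Mathlib


open TensorProduct Coalgebra

section Prebialgebra

variable (R H : Type) [CommRing R] [Ring H] [Algebra R H] [Coalgebra R H]

/-- The target map `ε_t(h) = ε(1₍₁₎h)1₍₂₎`. -/
noncomputable def epsT : H →ₗ[R] H :=
  (TensorProduct.lid R H).toLinearMap ∘ₗ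
    TensorProduct.map Coalgebra.counit LinearMap.id ∘ₗ
    LinearMap.mulLeft R (Coalgebra.comul (R := R) (1 : H)) ∘ₗ
    Algebra.TensorProduct.includeLeft.toLinearMap

/-- The source map `ε_s(h) = ε(h1₍₂₎)1₍₁₎`. -/
noncomputable def epsS : H →ₗ[R] H :=
  (TensorProduct.rid R H).toLinearMap ∘ₗ
    TensorProduct.map LinearMap.id Coalgebra.counit ∘ₗ
    LinearMap.mulRight R (Coalgebra.comul (R := R) (1 : H)) ∘ₗ
    Algebra.TensorProduct.includeRight.toLinearMap

/-- The map `ε̄_s(h) = ε(1₍₂₎h)1₍₁₎`. -/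
noncomputable def epsSbar : H →ₗ[R] H :=
  (TensorProduct.rid R H).toLinearMap ∘ₗ
    TensorProduct.map LinearMap.id Coalgebra.counit ∘ₗ
    LinearMap.mulLeft R (Coalgebra.comul (R := R) (1 : H)) ∘ₗ
    Algebra.TensorProduct.includeRight.toLinearMap

/-- The map `ε̄_t(h) = ε(h1₍₁₎)1₍₂₎`. -/
noncomputable def epsTbar : H →ₗ[R] H :=
  (TensorProduct.lid R H).toLinearMap ∘ₗ
    TensorProduct.map Coalgebra.counit LinearMap.id ∘ₗ
    LinearMap.mulRight R (Coalgebra.comul (R := R) (1 : H)) ∘ₗ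
    Algebra.TensorProduct.includeLeft.toLinearMap

/-- The prebialgebra axiom: the comultiplication is multiplicative, `Δ(hk) = Δ(h)Δ(k)`. -/
def ComulMul : Prop :=
  ∀ a b : H,
    Coalgebra.comul (R := R) (a * b) = Coalgebra.comul (R := R) a * Coalgebra.comul (R := R) b

/-- Axiom (lm): `ε(hkl) = ε(hk₍₁₎)ε(k₍₂₎l)` for all `h,k,l`. -/
noncomputable def LM : Prop :=
  ∀ h k l : H,
    Coalgebra.counit (R := R) (h * k * l) =
      LinearMap.mul' R R
        (TensorProduct.map (Coalgebra.counit ∘ₗ LinearMap.mulLeft R h)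
          (Coalgebra.counit ∘ₗ LinearMap.mulRight R l) (Coalgebra.comul k))

/-- Axiom (rm): `ε(hkl) = ε(hk₍₂₎)ε(k₍₁₎l)` for all `h,k,l`. -/
noncomputable def RM : Prop :=
  ∀ h k l : H,
    Coalgebra.counit (R := R) (h * k * l) =
      LinearMap.mul' R R
        (TensorProduct.map (Coalgebra.counit ∘ₗ LinearMap.mulRight R l)
          (Coalgebra.counit ∘ₗ LinearMap.mulLeft R h) (Coalgebra.comul k))

/-- `Δ²(1) = (id ⊗ Δ)(Δ(1))`, an element of `H ⊗ (H ⊗ H)`. -/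
noncomputable def comulSq1 : H ⊗[R] (H ⊗[R] H) :=
  (TensorProduct.map LinearMap.id Coalgebra.comul) (Coalgebra.comul (R := R) (1 : H))

/-- `1₍₁₎ ⊗ 1₍₂₎ ⊗ 1`, an element of `H ⊗ (H ⊗ H)`. -/
noncomputable def d1Left : H ⊗[R] (H ⊗[R] H) :=
  (TensorProduct.map LinearMap.id Algebra.TensorProduct.includeLeft.toLinearMap)
    (Coalgebra.comul (R := R) (1 : H))

/-- `1 ⊗ 1₍₁₎ ⊗ 1₍₂₎`, an element of `H ⊗ (H ⊗ H)`. -/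
noncomputable def d1Right : H ⊗[R] (H ⊗[R] H) :=
  (1 : H) ⊗ₜ[R] (Coalgebra.comul (R := R) (1 : H))

/-- Axiom (lc): `Δ²(1) = 1₍₁₎ ⊗ 1₍₂₎1₍₁'₎ ⊗ 1₍₂'₎`. -/
noncomputable def LC : Prop := comulSq1 R H = d1Left R H * d1Right R H

/-- Axiom (rc): `Δ²(1) = 1₍₁₎ ⊗ 1₍₁'₎1₍₂₎ ⊗ 1₍₂'₎`. -/
noncomputable def RC : Prop := comulSq1 R H = d1Right R H * d1Left R H

/-- The map `g : H → H*`, `⟨g(h), k⟩ = ε(kh)`. -/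
noncomputable def gmap : H →ₗ[R] (H →ₗ[R] R) :=
  LinearMap.llcomp R H H R (Coalgebra.counit (R := R)) ∘ₗ (LinearMap.mul R H).flip

/-- The map `g' : H → H*`, `⟨g'(h), k⟩ = ε(hk)`. -/
noncomputable def gmap' : H →ₗ[R] (H →ₗ[R] R) :=
  LinearMap.llcomp R H H R (Coalgebra.counit (R := R)) ∘ₗ LinearMap.mul R H

/-- The map `f : H* → H`, `f(h*) = ⟨h*,1₍₁₎⟩1₍₂₎`. -/
noncomputable def fmap (φ : H →ₗ[R] R) : H :=
  (TensorProduct.lid R H)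
    ((TensorProduct.map φ LinearMap.id) (Coalgebra.comul (R := R) (1 : H)))

end Prebialgebra

section MyAux
variable {R H : Type} [CommRing R] [Ring H] [Algebra R H] [Coalgebra R H]

lemma gmap_apply (h k : H) : gmap R H h k = Coalgebra.counit (R:=R) (k * h) := rfl

lemma epsT_apply (h : H) : epsT R H h =
    (TensorProduct.lid R H) ((TensorProduct.map Coalgebra.counit LinearMap.id)
      ((comul (R:=R) (1:H)) * (h ⊗ₜ[R] 1))) := rfl

lemma counit_map_comul (b : H) :
    (TensorProduct.lid R H) ((TensorProduct.map Coalgebra.counit LinearMap.id)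
      (comul (R:=R) b)) = b := by
  simpa [LinearMap.rTensor] using
    congrArg (TensorProduct.lid R H) (Coalgebra.rTensor_counit_comul (R:=R) b)

lemma counit_map_gen (g : H →ₗ[R] R) (b : H) :
    (TensorProduct.lid R R) ((TensorProduct.map Coalgebra.counit g) (comul (R:=R) b)) = g b := by
  have h1 : (TensorProduct.map (Coalgebra.counit (R:=R)) LinearMap.id) (comul (R:=R) b)
      = (1 : R) ⊗ₜ[R] b := Coalgebra.rTensor_counit_comul (R:=R) b
  have h2 : (TensorProduct.map (Coalgebra.counit (R:=R)) g)
      = TensorProduct.map (LinearMap.id : R →ₗ[R] R) g ∘ₗ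
          TensorProduct.map (Coalgebra.counit : H →ₗ[R] R) (LinearMap.id : H →ₗ[R] H) := by
    rw [← TensorProduct.map_comp]; simp
  rw [h2, LinearMap.comp_apply, h1]
  simp

lemma fmap_gmap (h : H) : fmap R H (gmap R H h) = epsT R H h := by
  show (TensorProduct.lid R H) ((TensorProduct.map (gmap R H h) LinearMap.id) (comul (R:=R) (1:H)))
      = (TensorProduct.lid R H) ((TensorProduct.map Coalgebra.counit LinearMap.id)
        ((comul (R:=R) (1:H)) * (h ⊗ₜ[R] 1)))
  generalize comul (R:=R) (1:H) = u
  induction u using TensorProduct.induction_on with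
  | zero => simp
  | tmul a b => simp [Algebra.TensorProduct.tmul_mul_tmul, gmap_apply]
  | add x y hx hy => simp [add_mul, hx, hy]

lemma counit_mul_epsT (hrm : RM R H) (k h : H) :
    Coalgebra.counit (R:=R) (k * epsT R H h) = Coalgebra.counit (R:=R) (k * h) := by
  have hr := hrm k 1 h
  rw [mul_one] at hr
  rw [hr, epsT_apply]
  generalize comul (R:=R) (1:H) = u
  induction u using TensorProduct.induction_on with
  | zero => simp
  | tmul a b => simp [Algebra.TensorProduct.tmul_mul_tmul, mul_comm]
  | add x y hx hy => simp [add_mul, mul_add, hx, hy]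

lemma gmap_epsT (hrm : RM R H) (h : H) : gmap R H (epsT R H h) = gmap R H h := by
  ext k; exact counit_mul_epsT hrm k h

lemma epsT_idem_rm (hrm : RM R H) (h : H) : epsT R H (epsT R H h) = epsT R H h := by
  rw [← fmap_gmap (epsT R H h), gmap_epsT hrm, fmap_gmap]

/-- RC implies epsT is idempotent. -/
lemma epsT_idem_rc (hrc : RC R H) (h : H) : epsT R H (epsT R H h) = epsT R H h := by
  classical
  set φ₁ : H →ₗ[R] R := Coalgebra.counit ∘ₗ LinearMap.mulRight R h with hφ₁
  set N : H ⊗[R] H →ₗ[R] H :=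
    (TensorProduct.lid R H).toLinearMap ∘ₗ
      TensorProduct.map Coalgebra.counit LinearMap.id with hN
  set M : H ⊗[R] (H ⊗[R] H) →ₗ[R] H :=
    (TensorProduct.lid R H).toLinearMap ∘ₗ TensorProduct.map φ₁ N with hM
  have key := congrArg M hrc
  have hL : M (comulSq1 R H) = epsT R H h := by
    show M ((TensorProduct.map LinearMap.id comul) (comul (R:=R) (1:H)))
        = (TensorProduct.lid R H) ((TensorProduct.map Coalgebra.counit LinearMap.id)
          ((comul (R:=R) (1:H)) * (h ⊗ₜ[R] 1)))
    generalize comul (R:=R) (1:H) = u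
    induction u using TensorProduct.induction_on with
    | zero => simp
    | tmul a b =>
        have : N (comul (R:=R) b) = b := counit_map_comul b
        simp [hM, Algebra.TensorProduct.tmul_mul_tmul, this, hφ₁,
          TensorProduct.smul_tmul', mul_comm]
    | add x y hx hy => simp_all [add_mul, mul_add]
  have aux : ∀ (u v : H ⊗[R] H),
      M (((1 : H) ⊗ₜ[R] v) * ((TensorProduct.map LinearMap.id
          Algebra.TensorProduct.includeLeft.toLinearMap) u)) =
      (TensorProduct.lid R H) ((TensorProduct.map Coalgebra.counit LinearMap.id)
        (v * (((TensorProduct.lid R H) ((TensorProduct.map Coalgebra.counit LinearMap.id)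
          (u * (h ⊗ₜ[R] 1)))) ⊗ₜ[R] 1))) := by
    intro u v
    induction u using TensorProduct.induction_on with
    | zero => simp
    | tmul a b =>
        induction v using TensorProduct.induction_on with
        | zero => simp
        | tmul c d =>
            simp [hM, hN, hφ₁, Algebra.TensorProduct.tmul_mul_tmul,
              TensorProduct.smul_tmul', TensorProduct.tmul_smul, smul_smul, mul_comm]
        | add x y hx hy =>
            simp only [map_add, add_mul, mul_add, TensorProduct.tmul_add] at *
            rw [hx, hy]
    | add x y hx hy =>
        simp only [map_add, add_mul, mul_add, TensorProduct.tmul_add,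
          TensorProduct.add_tmul] at *
        rw [hx, hy]
  have hR : M (d1Right R H * d1Left R H) = epsT R H (epsT R H h) := by
    show M (((1:H) ⊗ₜ[R] comul (R:=R) (1:H)) * ((TensorProduct.map LinearMap.id
        Algebra.TensorProduct.includeLeft.toLinearMap) (comul (R:=R) (1:H)))) = _
    rw [aux, epsT_apply, epsT_apply]
  rw [hL, hR] at key
  exact key.symm

lemma fmap_def (ψ : H →ₗ[R] R) : fmap R H ψ =
    (TensorProduct.lid R H) ((TensorProduct.map ψ LinearMap.id) (comul (R:=R) (1:H))) := rfl

/-- RC implies ε(k·ε_t(f(ψ))) = ε(k·f(ψ)). -/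
lemma counit_mul_epsT_fmap_rc (hrc : RC R H) (ψ : H →ₗ[R] R) (k : H) :
    Coalgebra.counit (R:=R) (k * epsT R H (fmap R H ψ)) =
      Coalgebra.counit (R:=R) (k * fmap R H ψ) := by
  classical
  set gk : H →ₗ[R] R := Coalgebra.counit ∘ₗ LinearMap.mulLeft R k with hgk
  set N : H ⊗[R] H →ₗ[R] R :=
    (TensorProduct.lid R R).toLinearMap ∘ₗ TensorProduct.map Coalgebra.counit gk with hN
  set M : H ⊗[R] (H ⊗[R] H) →ₗ[R] R :=
    (TensorProduct.lid R R).toLinearMap ∘ₗ TensorProduct.map ψ N with hM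
  have key := congrArg M hrc
  have hL : M (comulSq1 R H) = Coalgebra.counit (R:=R) (k * fmap R H ψ) := by
    rw [fmap_def]
    show M ((TensorProduct.map LinearMap.id comul) (comul (R:=R) (1:H)))
        = Coalgebra.counit (R:=R) (k * (TensorProduct.lid R H)
            ((TensorProduct.map ψ LinearMap.id) (comul (R:=R) (1:H))))
    generalize comul (R:=R) (1:H) = u
    induction u using TensorProduct.induction_on with
    | zero => simp
    | tmul a b =>
        have hb : N (comul (R:=R) b) = gk b := counit_map_gen gk b
        simp [hM, hb, hgk, mul_comm, TensorProduct.smul_tmul', mul_smul_comm, smul_smul]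
    | add x y hx hy => simp_all [mul_add]
  have aux : ∀ (u v : H ⊗[R] H),
      M (((1 : H) ⊗ₜ[R] v) * ((TensorProduct.map LinearMap.id
          Algebra.TensorProduct.includeLeft.toLinearMap) u)) =
      Coalgebra.counit (R:=R) (k * (TensorProduct.lid R H)
        ((TensorProduct.map Coalgebra.counit LinearMap.id)
          (v * (((TensorProduct.lid R H) ((TensorProduct.map ψ LinearMap.id) u)) ⊗ₜ[R] 1)))) := by
    intro u v
    induction u using TensorProduct.induction_on with
    | zero => simp
    | tmul a b =>
        induction v using TensorProduct.induction_on with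
        | zero => simp
        | tmul c d =>
            simp [hM, hN, hgk, Algebra.TensorProduct.tmul_mul_tmul,
              TensorProduct.smul_tmul', TensorProduct.tmul_smul, smul_smul,
              mul_smul_comm, mul_comm, mul_left_comm]
        | add x y hx hy =>
            simp only [map_add, add_mul, mul_add, TensorProduct.tmul_add] at *
            rw [hx, hy]
    | add x y hx hy =>
        simp only [map_add, add_mul, mul_add, TensorProduct.tmul_add,
          TensorProduct.add_tmul] at *
        rw [hx, hy]
  have hR : M (d1Right R H * d1Left R H) =
      Coalgebra.counit (R:=R) (k * epsT R H (fmap R H ψ)) := by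
    rw [epsT_apply, fmap_def]
    exact aux (comul (R:=R) (1:H)) (comul (R:=R) (1:H))
  rw [hL, hR] at key
  exact key.symm

lemma gmap_epsT_fmap_rc (hrc : RC R H) (ψ : H →ₗ[R] R) :
    gmap R H (epsT R H (fmap R H ψ)) = gmap R H (fmap R H ψ) := by
  ext k; exact counit_mul_epsT_fmap_rc hrc ψ k

end MyAux


/-- If a prebialgebra `H` satisfies (rm) or (rc), then `g` and `f` restrict
to mutually inverse isomorphisms between `H_t = Im(ε_t) = Im(f∘g)` and
`H_t* = Im(ε_t*) = Im(g∘f)`. -/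
theorem f_g_inverse_on_Ht
    (R H : Type) [CommRing R] [Ring H] [Algebra R H] [Coalgebra R H]
    (hpre : ComulMul R H) (hax : RM R H ∨ RC R H) :
    (∀ z ∈ Set.range (epsT R H),
      gmap R H z ∈ Set.range (fun φ : H →ₗ[R] R => gmap R H (fmap R H φ))) ∧
    (∀ φ ∈ Set.range (fun ψ : H →ₗ[R] R => gmap R H (fmap R H ψ)),
      fmap R H φ ∈ Set.range (epsT R H)) ∧
    (∀ z ∈ Set.range (epsT R H), fmap R H (gmap R H z) = z) ∧
    (∀ φ ∈ Set.range (fun ψ : H →ₗ[R] R => gmap R H (fmap R H ψ)),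
      gmap R H (fmap R H φ) = φ) := by
  have P : ∀ x : H, epsT R H (epsT R H x) = epsT R H x := by
    rcases hax with hrm | hrc
    · exact epsT_idem_rm hrm
    · exact epsT_idem_rc hrc
  have Q : ∀ ψ : H →ₗ[R] R,
      gmap R H (epsT R H (fmap R H ψ)) = gmap R H (fmap R H ψ) := by
    rcases hax with hrm | hrc
    · intro ψ; exact gmap_epsT hrm _
    · exact gmap_epsT_fmap_rc hrc
  refine ⟨?_, ?_, ?_, ?_⟩
  · rintro z ⟨x, rfl⟩
    exact ⟨gmap R H x, by simp only [fmap_gmap]⟩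
  · rintro φ ⟨ψ, rfl⟩
    exact ⟨fmap R H ψ, by simp only [fmap_gmap]⟩
  · rintro z ⟨x, rfl⟩
    rw [fmap_gmap]; exact P x
  · rintro φ ⟨ψ, rfl⟩
    simp only []
    rw [fmap_gmap]; exact Q ψ
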